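/- Let Γ be a simple graph on vertex set V and I ⊆ V. Then the building set of the contraction graph equals the contraction of the graphical building set: B(Γ/I) = B(Γ)/I. -/

import Mathlib

/-- The graphical building set of a simple graph `G`: all (nonempty) vertex sets
`S` inducing a connected subgraph. -/
def graphBuilding {V : Type*} (G : SimpleGraph V) : Set (Set V) :=
  {S | (G.induce S).Connected}

/-- The contraction `B/I`: nonempty subsets `J` of `V \ I` with `J ∈ B` or
`I' ∪ J ∈ B` for some `I' ⊆ I`. -/
def contractBS {V : Type*} (B : Set (Set V)) (I : Set V) : Set (Set V) :=
  {J | J ⊆ Iᶜ ∧ J.Nonempty ∧ (J ∈ B ∨ ∃ I' ⊆ I, I' ∪ J ∈ B)}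

/-- The contraction `Γ/I`: the graph on `V \ I` where two distinct vertices are
adjacent iff they are joined in `Γ` by an edge or a path whose internal vertices
all lie in `I` (i.e. by a walk whose support is contained in `{u, v} ∪ I`). -/
def contractGraph {V : Type*} (G : SimpleGraph V) (I : Set V) : SimpleGraph ↥(Iᶜ) :=
  SimpleGraph.fromRel (fun u v =>
    ∃ p : G.Walk u v, ∀ w ∈ p.support, w = (u : V) ∨ w = (v : V) ∨ w ∈ I)

open SimpleGraph

/-- Lift a `G`-walk with support in `S` to reachability in the induced graph. -/
lemma reachable_induce_of_walk {V : Type*} {G : SimpleGraph V} {S : Set V} :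
    ∀ {a b : V} (p : G.Walk a b), (∀ w ∈ p.support, w ∈ S) →
    ∀ (ha : a ∈ S) (hb : b ∈ S), (G.induce S).Reachable ⟨a, ha⟩ ⟨b, hb⟩ := by
  intro a b p
  induction p with
  | nil => intro _ ha hb; exact Reachable.refl _
  | @cons a y b h p ih =>
    intro hsupp ha hb
    have hy : y ∈ S := hsupp y (by simp)
    have hadj : (G.induce S).Adj ⟨a, ha⟩ ⟨y, hy⟩ := h
    exact hadj.reachable.trans (ih (fun w hw => hsupp w (by simp [hw])) hy hb)

/-- A single contraction step: a walk from `u` to `x` (both in `J`) with internal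
vertices in `I` yields reachability in the induced contraction graph. -/
lemma adjStep {V : Type*} (G : SimpleGraph V) (I J : Set V) (hJI : J ⊆ Iᶜ)
    {u x : V} (hu : u ∈ J) (hx : x ∈ J)
    (q : G.Walk u x) (hq : ∀ w ∈ q.support, w = u ∨ w = x ∨ w ∈ I) :
    ((contractGraph G I).induce (Subtype.val ⁻¹' J)).Reachable
      ⟨⟨u, hJI hu⟩, hu⟩ ⟨⟨x, hJI hx⟩, hx⟩ := by
  rcases eq_or_ne u x with rfl | hne
  · exact Reachable.refl _
  · apply SimpleGraph.Adj.reachable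
    show (contractGraph G I).Adj ⟨u, hJI hu⟩ ⟨x, hJI hx⟩
    rw [contractGraph, SimpleGraph.fromRel_adj]
    refine ⟨by simpa [Subtype.ext_iff] using hne, Or.inl ⟨q, ?_⟩⟩
    intro w hw
    exact hq w hw

lemma lemA {V : Type*} (G : SimpleGraph V) (I J : Set V) (hJI : J ⊆ Iᶜ)
    {x v : V} (p : G.Walk x v) :
    (∀ w ∈ p.support, w ∈ I ∨ w ∈ J) → ∀ (hv : v ∈ J),
    ∀ (u : V) (hu : u ∈ J) (q : G.Walk u x),
      (∀ w ∈ q.support, w = u ∨ w = x ∨ w ∈ I) →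
      ((contractGraph G I).induce (Subtype.val ⁻¹' J)).Reachable
        ⟨⟨u, hJI hu⟩, hu⟩ ⟨⟨v, hJI hv⟩, hv⟩ := by
  induction p with
  | nil =>
    intro _ hv u hu q hq
    exact adjStep G I J hJI hu hv q hq
  | @cons x y v h p ih =>
    intro hp hv u hu q hq
    have hpy : ∀ w ∈ p.support, w ∈ I ∨ w ∈ J := fun w hw => hp w (by simp [hw])
    rcases hp x (by simp) with hxI | hxJ
    · refine ih hpy hv u hu (q.concat h) ?_
      intro w hw
      rw [Walk.support_concat, List.mem_append] at hw
      rcases hw with hw | hw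
      · rcases hq w hw with rfl | rfl | hwI
        · exact Or.inl rfl
        · exact Or.inr (Or.inr hxI)
        · exact Or.inr (Or.inr hwI)
      · simp only [List.mem_singleton] at hw
        exact Or.inr (Or.inl hw)
    · have r1 := adjStep G I J hJI hu hxJ q hq
      have r2 := ih hpy hv x hxJ h.toWalk (by
        intro w hw
        simp only [Adj.toWalk, Walk.support_cons, Walk.support_nil,
          List.mem_cons, List.mem_singleton] at hw
        rcases hw with rfl | rfl | h'
        · exact Or.inl rfl
        · exact Or.inr (Or.inl rfl)
        · simp at h')
      exact r1.trans r2

/-- Reverse inclusion helper: a connected `I' ∪ J` yields connectivity of the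
contraction induced on (the preimage of) `J`. -/
lemma reverse_main {V : Type*} (G : SimpleGraph V) (I J I' : Set V) (hJI : J ⊆ Iᶜ)
    (hI' : I' ⊆ I) (hconn : (G.induce (I' ∪ J)).Connected) (hne : J.Nonempty) :
    ((contractGraph G I).induce (Subtype.val ⁻¹' J)).Connected := by
  rw [SimpleGraph.connected_iff]
  constructor
  · rintro ⟨⟨a, haI⟩, (ha : a ∈ J)⟩ ⟨⟨b, hbI⟩, (hb : b ∈ J)⟩
    have haS : a ∈ I' ∪ J := Or.inr ha
    have hbS : b ∈ I' ∪ J := Or.inr hb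
    obtain ⟨w⟩ := hconn.preconnected ⟨a, haS⟩ ⟨b, hbS⟩
    let p := w.map (SimpleGraph.Embedding.induce (I' ∪ J)).toHom
    have hp : ∀ z ∈ (w.map (SimpleGraph.Embedding.induce (I' ∪ J)).toHom).support,
        z ∈ I ∨ z ∈ J := by
      intro z hz
      rw [SimpleGraph.Walk.support_map, List.mem_map] at hz
      obtain ⟨⟨z', hz'⟩, _, rfl⟩ := hz
      rcases hz' with h | h
      · exact Or.inl (hI' h)
      · exact Or.inr h
    exact lemA G I J hJI (w.map (SimpleGraph.Embedding.induce (I' ∪ J)).toHom) hp hb a ha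
      SimpleGraph.Walk.nil (by simp)
  · exact ⟨⟨⟨hne.choose, hJI hne.choose_spec⟩, hne.choose_spec⟩⟩

/-- `B(Γ/I) = B(Γ)/I`: the graphical building set of the contraction graph equals
the contraction of the graphical building set. -/
theorem graphBuilding_contract {V : Type*} (G : SimpleGraph V) (I : Set V) :
    (fun T : Set ↥(Iᶜ) => (Subtype.val '' T : Set V)) '' graphBuilding (contractGraph G I) =
      contractBS (graphBuilding G) I := by
  classical
  ext J
  simp only [Set.mem_image]
  constructor
  · rintro ⟨T, hT, rfl⟩
    have hT' : ((contractGraph G I).induce T).Connected := hT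
    have hJI : (Subtype.val '' T : Set V) ⊆ Iᶜ := by
      rintro _ ⟨⟨a, ha⟩, _, rfl⟩; exact ha
    obtain ⟨t0⟩ := hT'.nonempty
    set J : Set V := Subtype.val '' T with hJdef
    have hj0 : (t0.1 : V) ∈ J := ⟨t0.1, t0.2, rfl⟩
    set S : Set V := I ∪ J with hSdef
    have hJS : J ⊆ S := Set.subset_union_right
    -- every element of T is reachable from t0 in induce S
    have claim2 : ∀ t : T, (G.induce S).Reachable ⟨t0.1.1, hJS hj0⟩
        ⟨t.1.1, hJS ⟨t.1, t.2, rfl⟩⟩ := by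
      intro t
      obtain ⟨w⟩ := hT'.preconnected t0 t
      induction w with
      | nil => exact Reachable.refl _
      | @cons a c b hadj w ih =>
        refine Reachable.trans ?_ (ih ⟨c.1, c.2, rfl⟩)
        have hadj' : (contractGraph G I).Adj a.1 c.1 := hadj
        rw [contractGraph, SimpleGraph.fromRel_adj] at hadj'
        have hmem : ∀ (d : T) (z : V), z = (d.1 : V) ∨ z ∈ I → z ∈ S := by
          rintro d z (rfl | hz)
          · exact hJS ⟨d.1, d.2, rfl⟩
          · exact Or.inl hz
        rcases hadj'.2 with ⟨q, hq⟩ | ⟨q, hq⟩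
        · refine reachable_induce_of_walk q ?_ _ _
          intro z hz
          rcases hq z hz with h | h | h
          exacts [hmem a z (Or.inl h), hmem c z (Or.inl h), hmem a z (Or.inr h)]
        · refine (reachable_induce_of_walk q ?_ _ _).symm
          intro z hz
          rcases hq z hz with h | h | h
          exacts [hmem c z (Or.inl h), hmem a z (Or.inl h), hmem a z (Or.inr h)]
    refine ⟨hJI, ⟨t0.1.1, hj0⟩, Or.inr ?_⟩
    set I' : Set V := {w | w ∈ I ∧ ∃ hw : w ∈ S,
      (G.induce S).Reachable ⟨t0.1.1, hJS hj0⟩ ⟨w, hw⟩} with hI'def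
    have hI'I : I' ⊆ I := fun w hw => hw.1
    refine ⟨I', hI'I, ?_⟩
    have hUS : I' ∪ J ⊆ S := Set.union_subset (fun w hw => Or.inl hw.1) hJS
    have key : ∀ x (hx : x ∈ I' ∪ J),
        (G.induce (I' ∪ J)).Reachable ⟨t0.1.1, Or.inr hj0⟩ ⟨x, hx⟩ := by
      intro x hx
      have hreach : (G.induce S).Reachable ⟨t0.1.1, hJS hj0⟩ ⟨x, hUS hx⟩ := by
        rcases hx with hx | hx
        · exact hx.2.choose_spec
        · obtain ⟨t, ht, rfl⟩ := hx
          exact claim2 ⟨t, ht⟩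
      obtain ⟨w⟩ := hreach
      -- every support vertex of w is in I' ∪ J
      have hsupp : ∀ z ∈ w.support, (z : ↥S).1 ∈ I' ∪ J := by
        intro z hz
        rcases z.2 with hzI | hzJ
        · exact Or.inl ⟨hzI, z.2, ⟨w.takeUntil z hz⟩⟩
        · exact Or.inr hzJ
      have hp : ∀ z ∈ (w.map (SimpleGraph.Embedding.induce S).toHom).support,
          z ∈ I' ∪ J := by
        intro z hz
        rw [SimpleGraph.Walk.support_map, List.mem_map] at hz
        obtain ⟨z', hz', rfl⟩ := hz
        exact hsupp z' hz'
      exact reachable_induce_of_walk (w.map (SimpleGraph.Embedding.induce S).toHom) hp _ _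
    show (G.induce (I' ∪ J)).Connected
    rw [SimpleGraph.connected_iff]
    refine ⟨fun x y => ((key x.1 x.2).symm.trans (key y.1 y.2)), ⟨⟨t0.1.1, Or.inr hj0⟩⟩⟩
  · rintro ⟨hJI, hne, hB⟩
    have : ∃ I' ⊆ I, (G.induce (I' ∪ J)).Connected := by
      rcases hB with hB | ⟨I', hI', hB⟩
      · exact ⟨∅, Set.empty_subset _, by rwa [Set.empty_union]⟩
      · exact ⟨I', hI', hB⟩
    obtain ⟨I', hI', hconn⟩ := this
    refine ⟨Subtype.val ⁻¹' J, reverse_main G I J I' hJI hI' hconn hne, ?_⟩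
    rw [Set.image_preimage_eq_inter_range, Subtype.range_coe]
    exact Set.inter_eq_self_of_subset_left hJI
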